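/- Let G be a graph with an ordering τ of its vertices composed of t consecutive independent sets, let d = max over vertices of the forward degree d⁺_τ(v), and let (L_v) be lists of colors with |L_v| ≥ d⁺_τ(v) + 2 for all v. Then for any two proper list-colorings σ, η compatible with the lists, there exists a recoloring sequence from σ to η, each step recoloring one vertex to a color in its list while keeping the coloring proper, of total length at most n·k^{t+1}, where k = |∪_v L_v| and n = |V(G)|. -/

import Mathlib

set_option linter.unusedSectionVars false

namespace Stmt9
variable {V : Type*} [Fintype V] [DecidableEq V] (G : SimpleGraph V) [DecidableRel G.Adj]
  (ℓ : V → ℕ) (L : V → Finset ℕ)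

def play : (V → ℕ) → List (V × ℕ) → (V → ℕ)
  | f, [] => f
  | f, p :: l => play (Function.update f p.1 p.2) l

def Proper (s : ℕ) (f : V → ℕ) : Prop :=
  ∀ u v, G.Adj u v → s ≤ ℓ u → s ≤ ℓ v → f u ≠ f v

def Valid : ℕ → (V → ℕ) → List (V × ℕ) → Prop
  | _, _, [] => True
  | s, f, p :: l => s ≤ ℓ p.1 ∧ p.2 ∈ L p.1 ∧ Proper G ℓ s (Function.update f p.1 p.2)
      ∧ Valid s (Function.update f p.1 p.2) l

def count (v : V) (l : List (V × ℕ)) : ℕ := l.countP (fun p => decide (p.1 = v))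

variable {G ℓ L}

@[simp] lemma play_nil (f : V → ℕ) : play f ([] : List (V × ℕ)) = f := rfl

@[simp] lemma play_cons (f : V → ℕ) (p : V × ℕ) (l : List (V × ℕ)) :
    play f (p :: l) = play (Function.update f p.1 p.2) l := rfl

lemma play_append (f : V → ℕ) (a b : List (V × ℕ)) :
    play f (a ++ b) = play (play f a) b := by
  induction a generalizing f with
  | nil => rfl
  | cons p a ih => simp [play, ih]

@[simp] lemma count_nil (v : V) : count v ([] : List (V × ℕ)) = 0 := rfl

lemma count_cons (v : V) (p : V × ℕ) (l : List (V × ℕ)) :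
    count v (p :: l) = count v l + (if p.1 = v then 1 else 0) := by
  simp [count, List.countP_cons]

lemma count_append (v : V) (a b : List (V × ℕ)) :
    count v (a ++ b) = count v a + count v b := by
  simp [count, List.countP_append]

lemma play_eq_of_count_zero (f : V → ℕ) (l : List (V × ℕ)) (v : V)
    (h : count v l = 0) : play f l v = f v := by
  induction l generalizing f with
  | nil => rfl
  | cons p l ih =>
      rw [count_cons] at h
      have h1 : count v l = 0 := by omega
      have h2 : p.1 ≠ v := by
        intro he; simp [he] at h
      rw [play_cons, ih _ h1, Function.update_of_ne (Ne.symm h2)]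

lemma Proper.mono {s s' : ℕ} (hs : s ≤ s') {f : V → ℕ} (h : Proper G ℓ s f) :
    Proper G ℓ s' f := fun u v ha hu hv => h u v ha (hs.trans hu) (hs.trans hv)

lemma Proper.congr {s : ℕ} {f g : V → ℕ} (hfg : ∀ v, s ≤ ℓ v → f v = g v)
    (h : Proper G ℓ s f) : Proper G ℓ s g := by
  intro u v ha hu hv
  rw [← hfg u hu, ← hfg v hv]; exact h u v ha hu hv

lemma valid_congr {s : ℕ} {f g : V → ℕ} (hfg : ∀ v, s ≤ ℓ v → f v = g v)
    {l : List (V × ℕ)} (h : Valid G ℓ L s f l) :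
    Valid G ℓ L s g l ∧ ∀ v, s ≤ ℓ v → play f l v = play g l v := by
  induction l generalizing f g with
  | nil => exact ⟨trivial, fun v _ => hfg v ‹_›⟩
  | cons p l ih =>
      obtain ⟨h1, h2, h3, h4⟩ := h
      have hfg' : ∀ v, s ≤ ℓ v → Function.update f p.1 p.2 v = Function.update g p.1 p.2 v := by
        intro v hv
        rcases eq_or_ne v p.1 with rfl | hne
        · simp
        · rw [Function.update_of_ne hne, Function.update_of_ne hne]; exact hfg v hv
      obtain ⟨hA, hB⟩ := ih hfg' h4
      exact ⟨⟨h1, h2, h3.congr hfg', hA⟩, hB⟩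

lemma valid_append {s : ℕ} {f : V → ℕ} {a b : List (V × ℕ)}
    (ha : Valid G ℓ L s f a) (hb : Valid G ℓ L s (play f a) b) :
    Valid G ℓ L s f (a ++ b) := by
  induction a generalizing f with
  | nil => exact hb
  | cons p a ih =>
      obtain ⟨h1, h2, h3, h4⟩ := ha
      exact ⟨h1, h2, h3, ih h4 hb⟩

lemma proper_play {s : ℕ} {f : V → ℕ} {l : List (V × ℕ)}
    (hf : Proper G ℓ s f) (h : Valid G ℓ L s f l) : Proper G ℓ s (play f l) := by
  induction l generalizing f with
  | nil => exact hf
  | cons p l ih => exact ih h.2.2.1 h.2.2.2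

lemma lists_play {s : ℕ} {f : V → ℕ} {l : List (V × ℕ)}
    (hf : ∀ v, f v ∈ L v) (h : Valid G ℓ L s f l) : ∀ v, play f l v ∈ L v := by
  induction l generalizing f with
  | nil => exact hf
  | cons p l ih =>
      refine ih (fun v => ?_) h.2.2.2
      rcases eq_or_ne v p.1 with rfl | hne
      · simpa using h.2.1
      · rw [Function.update_of_ne hne]; exact hf v

lemma valid_take {s : ℕ} {f : V → ℕ} {l : List (V × ℕ)}
    (h : Valid G ℓ L s f l) (i : ℕ) : Valid G ℓ L s f (l.take i) := by
  induction l generalizing f i with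
  | nil => simp [Valid]
  | cons p l ih =>
      cases i with
      | zero => trivial
      | succ i => exact ⟨h.1, h.2.1, h.2.2.1, ih h.2.2.2 i⟩

lemma valid_mem {s : ℕ} {f : V → ℕ} {l : List (V × ℕ)}
    (h : Valid G ℓ L s f l) : ∀ p ∈ l, s ≤ ℓ p.1 ∧ p.2 ∈ L p.1 := by
  induction l generalizing f with
  | nil => simp
  | cons q l ih =>
      intro p hp
      rcases List.mem_cons.mp hp with rfl | hp
      · exact ⟨h.1, h.2.1⟩
      · exact ih h.2.2.2 p hp

lemma count_eq_zero_of_level {s : ℕ} {f : V → ℕ} {l : List (V × ℕ)}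
    (h : Valid G ℓ L s f l) {v : V} (hv : ℓ v < s) : count v l = 0 := by
  simp only [count, List.countP_eq_zero]
  intro p hp hd
  have h2 := (valid_mem h p hp).1
  simp only [decide_eq_true_eq] at hd
  rw [hd] at h2
  omega

lemma length_eq_sum_count (l : List (V × ℕ)) :
    l.length = ∑ v : V, count v l := by
  induction l with
  | nil => simp
  | cons p l ih =>
      simp only [List.length_cons, ih, count_cons, Finset.sum_add_distrib]
      rw [Finset.sum_ite_eq Finset.univ p.1 (fun _ => 1)]
      simp [add_comm]

lemma countP_le_sum (l : List (V × ℕ)) (F : Finset V) (P : V × ℕ → Bool)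
    (h : ∀ p ∈ l, P p → p.1 ∈ F) :
    l.countP P ≤ ∑ u ∈ F, count u l := by
  induction l with
  | nil => simp
  | cons p l ih =>
      have ih' := ih (fun q hq => h q (List.mem_cons_of_mem _ hq))
      rw [List.countP_cons]
      have : ∑ u ∈ F, count u (p :: l) = (∑ u ∈ F, count u l) + (if p.1 ∈ F then 1 else 0) := by
        simp only [count_cons, Finset.sum_add_distrib]
        congr 1
        rw [Finset.sum_ite_eq F p.1 (fun _ => 1)]
      rw [this]
      by_cases hP : P p = true
      · have : p.1 ∈ F := h p (List.mem_cons_self) hP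
        simp [hP, this]; omega
      · simp [hP]; omega


section

lemma exists_dodge_color
    (hdeg : ∀ v : V, (Finset.univ.filter (fun w => G.Adj v w ∧ ℓ v < ℓ w)).card + 2 ≤ (L v).card)
    (v : V) (c : ℕ) (f : V → ℕ) :
    ∃ d ∈ L v, d ≠ c ∧ ∀ w, G.Adj v w → ℓ v < ℓ w → d ≠ f w := by
  have hXcard : ((Finset.univ.filter (fun w => G.Adj v w ∧ ℓ v < ℓ w)).image f ∪ {c}).card
      ≤ (Finset.univ.filter (fun w => G.Adj v w ∧ ℓ v < ℓ w)).card + 1 := by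
    refine le_trans (Finset.card_union_le _ _) ?_
    have := Finset.card_image_le (s := Finset.univ.filter (fun w => G.Adj v w ∧ ℓ v < ℓ w)) (f := f)
    simp only [Finset.card_singleton]
    omega
  have h1 := Finset.le_card_sdiff ((Finset.univ.filter (fun w => G.Adj v w ∧ ℓ v < ℓ w)).image f ∪ {c}) (L v)
  have h2 := hdeg v
  have hpos : 0 < (L v \ ((Finset.univ.filter (fun w => G.Adj v w ∧ ℓ v < ℓ w)).image f ∪ {c})).card := by
    omega
  obtain ⟨d, hd⟩ := Finset.card_pos.mp hpos
  rw [Finset.mem_sdiff] at hd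
  refine ⟨d, hd.1, ?_, ?_⟩
  · intro he
    exact hd.2 (Finset.mem_union_right _ (by simp [he]))
  · intro w haw hlw he
    refine hd.2 (Finset.mem_union_left _ ?_)
    refine Finset.mem_image.mpr ⟨w, ?_, he.symm⟩
    simp [haw, hlw]

lemma dodge (hnadj : ∀ u v : V, ℓ u = ℓ v → ¬ G.Adj u v)
    (hdeg : ∀ v : V, (Finset.univ.filter (fun w => G.Adj v w ∧ ℓ v < ℓ w)).card + 2 ≤ (L v).card)
    {s : ℕ} {u : V} {c : ℕ} :
    ∀ (vs : List V) (f : V → ℕ), vs.Nodup → (∀ v ∈ vs, ℓ v = s ∧ G.Adj u v) →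
    Proper G ℓ s f → (∀ v, f v ∈ L v) →
    ∃ m, Valid G ℓ L s f m ∧
      (∀ v, v ∉ vs → play f m v = f v) ∧
      (∀ v ∈ vs, play f m v ≠ c) ∧
      (∀ v, count v m ≤ if v ∈ vs then 1 else 0) := by
  intro vs
  induction vs with
  | nil =>
      intro f _ _ _ _
      exact ⟨[], trivial, fun v _ => rfl, by simp, by simp [count]⟩
  | cons v vs ih =>
      intro f hnd hvs hp hfL
      have hv := hvs v (List.mem_cons_self)
      have hvs1 : ℓ v = s := hv.1
      obtain ⟨d, hdL, hdc, hdw⟩ := exists_dodge_color hdeg v c f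
      set f' := Function.update f v d with hf'
      have hup : f' v = d := Function.update_self v d f
      have hun : ∀ x, x ≠ v → f' x = f x := fun x hx => Function.update_of_ne hx d f
      have hp' : Proper G ℓ s f' := by
        intro a bb hadj ha hb
        by_cases hav : a = v <;> by_cases hbv : bb = v
        · exact absurd hadj (by rw [hav, hbv]; exact G.irrefl)
        · rw [hav] at hadj ha ⊢
          rw [hup, hun bb hbv]
          have hlt : ℓ v < ℓ bb := by
            rcases Nat.lt_or_ge (ℓ v) (ℓ bb) with h | h
            · exact h
            · exact absurd hadj (hnadj v bb (by omega))
          exact hdw bb hadj hlt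
        · rw [hbv] at hadj hb ⊢
          rw [hup, hun a hav]
          have hlt : ℓ v < ℓ a := by
            rcases Nat.lt_or_ge (ℓ v) (ℓ a) with h | h
            · exact h
            · exact absurd hadj.symm (hnadj v a (by omega))
          intro hEq
          exact (hdw a hadj.symm hlt) hEq.symm
        · rw [hun a hav, hun bb hbv]
          exact hp a bb hadj ha hb
      have hfL' : ∀ w, f' w ∈ L w := by
        intro w
        by_cases hw : w = v
        · rw [hw, hup]; exact hdL
        · rw [hun w hw]; exact hfL w
      obtain ⟨m', hval', hout', hnc', hcnt'⟩ :=
        ih f' (List.nodup_cons.mp hnd).2 (fun w hw => hvs w (List.mem_cons_of_mem _ hw)) hp' hfL'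
      refine ⟨(v, d) :: m', ⟨le_of_eq hvs1.symm, hdL, hp', hval'⟩, ?_, ?_, ?_⟩
      · intro x hx
        have hxv : x ≠ v := fun h => hx (h ▸ List.mem_cons_self)
        have hxvs : x ∉ vs := fun h => hx (List.mem_cons_of_mem _ h)
        rw [play_cons, hout' x hxvs]
        exact hun x hxv
      · intro x hx
        rcases List.mem_cons.mp hx with rfl | hxvs
        · have hxvs : x ∉ vs := (List.nodup_cons.mp hnd).1
          rw [play_cons, hout' x hxvs, hup]
          exact hdc
        · exact hnc' x hxvs
      · intro x
        rw [count_cons]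
        have hmem : (x ∈ v :: vs) ↔ (x = v ∨ x ∈ vs) := List.mem_cons
        by_cases hxv : x = v
        · subst hxv
          have hxvs : x ∉ vs := (List.nodup_cons.mp hnd).1
          have := hcnt' x
          simp only [hxvs, if_false] at this
          rw [if_pos rfl, if_pos ((List.mem_cons_self (a := x) (l := vs)))]
          omega
        · have := hcnt' x
          simp only [if_neg (fun h : v = x => hxv h.symm), add_zero]
          by_cases hx : x ∈ vs
          · simp only [hmem, hx, or_true, if_true] at this ⊢; omega
          · have : count x m' ≤ 0 := by simpa [hx] using hcnt' x
            have hnot : ¬ (x = v ∨ x ∈ vs) := by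
              rintro (h | h); exact hxv h; exact hx h
            simp only [hmem, hnot, if_false]
            omega

lemma finish (hnadj : ∀ u v : V, ℓ u = ℓ v → ¬ G.Adj u v)
    {s : ℕ} {η : V → ℕ} (hη : Proper G ℓ s η) :
    ∀ (vs : List V) (g : V → ℕ), vs.Nodup → (∀ v ∈ vs, ℓ v = s) → Proper G ℓ s g →
    (∀ v, η v ∈ L v) → (∀ w, s + 1 ≤ ℓ w → g w = η w) →
    ∃ m, Valid G ℓ L s g m ∧ (∀ v, play g m v = if v ∈ vs then η v else g v) ∧
      (∀ v, count v m ≤ if v ∈ vs then 1 else 0) := by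
  intro vs
  induction vs with
  | nil =>
      intro g _ _ _ _ _
      exact ⟨[], trivial, by simp, by simp [count]⟩
  | cons v vs ih =>
      intro g hnd hvs hp hηL hhigh
      have hv : ℓ v = s := hvs v (List.mem_cons_self)
      set g' := Function.update g v (η v) with hg'
      have hup : g' v = η v := Function.update_self v (η v) g
      have hun : ∀ x, x ≠ v → g' x = g x := fun x hx => Function.update_of_ne hx (η v) g
      have hkey : ∀ bb, G.Adj v bb → s ≤ ℓ bb → η v ≠ g bb := by
        intro bb hadj hb
        have hlt : s + 1 ≤ ℓ bb := by
          rcases Nat.lt_or_ge s (ℓ bb) with h | h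
          · omega
          · exact absurd hadj (hnadj v bb (by omega))
        rw [hhigh bb hlt]
        exact hη v bb hadj (by omega) (by omega)
      have hp' : Proper G ℓ s g' := by
        intro a bb hadj ha hb
        by_cases hav : a = v <;> by_cases hbv : bb = v
        · exact absurd hadj (by rw [hav, hbv]; exact G.irrefl)
        · rw [hav] at hadj ha ⊢
          rw [hup, hun bb hbv]
          exact hkey bb hadj hb
        · rw [hbv] at hadj hb ⊢
          rw [hup, hun a hav]
          intro hEq
          exact (hkey a hadj.symm ha) hEq.symm
        · rw [hun a hav, hun bb hbv]
          exact hp a bb hadj ha hb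
      have hhigh' : ∀ w, s + 1 ≤ ℓ w → g' w = η w := by
        intro w hw
        have hwv : w ≠ v := by
          intro h; rw [h, hv] at hw; omega
        rw [hun w hwv]; exact hhigh w hw
      obtain ⟨m', hval', hplay', hcnt'⟩ :=
        ih g' (List.nodup_cons.mp hnd).2 (fun w hw => hvs w (List.mem_cons_of_mem _ hw)) hp' hηL hhigh'
      refine ⟨(v, η v) :: m', ⟨le_of_eq hv.symm, hηL v, hp', hval'⟩, ?_, ?_⟩
      · intro x
        rw [play_cons, ← hg', hplay' x]
        have hmem : (x ∈ v :: vs) ↔ (x = v ∨ x ∈ vs) := List.mem_cons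
        by_cases hxv : x = v
        · have hxvs : x ∉ vs := by rw [hxv]; exact (List.nodup_cons.mp hnd).1
          rw [hxv]
          simp only [hxvs, if_false, hup]
          simp [hmem]
        · rw [hun x hxv]
          by_cases hx : x ∈ vs
          · simp [hmem, hx]
          · have hnot : ¬ (x = v ∨ x ∈ vs) := by
              rintro (h | h); exact hxv h; exact hx h
            simp [hmem, hx, hnot, hxv]
      · intro x
        rw [count_cons]
        have hmem : (x ∈ v :: vs) ↔ (x = v ∨ x ∈ vs) := List.mem_cons
        by_cases hxv : x = v
        · subst hxv
          have hxvs : x ∉ vs := (List.nodup_cons.mp hnd).1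
          have := hcnt' x
          simp only [hxvs, if_false] at this
          rw [if_pos rfl, if_pos ((List.mem_cons_self (a := x) (l := vs)))]
          omega
        · simp only [if_neg (fun h : v = x => hxv h.symm), add_zero]
          by_cases hx : x ∈ vs
          · have := hcnt' x
            simp only [hx, if_true] at this
            simp only [hmem, hx, or_true, if_true]
            omega
          · have : count x m' ≤ 0 := by simpa [hx] using hcnt' x
            have hnot : ¬ (x = v ∨ x ∈ vs) := by
              rintro (h | h); exact hxv h; exact hx h
            simp only [hmem, hnot, if_false]
            omega

lemma inner (hnadj : ∀ u v : V, ℓ u = ℓ v → ¬ G.Adj u v)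
    (hdeg : ∀ v : V, (Finset.univ.filter (fun w => G.Adj v w ∧ ℓ v < ℓ w)).card + 2 ≤ (L v).card)
    {s : ℕ} :
    ∀ (l' : List (V × ℕ)) (f : V → ℕ), Valid G ℓ L (s + 1) f l' → Proper G ℓ s f →
    (∀ v, f v ∈ L v) →
    ∃ m, Valid G ℓ L s f m ∧
      (∀ v, s + 1 ≤ ℓ v → play f m v = play f l' v) ∧
      (∀ v, ℓ v < s → play f m v = f v) ∧
      (∀ v, ℓ v ≠ s → count v m = count v l') ∧
      (∀ v, ℓ v = s → count v m ≤ l'.countP (fun q => decide (G.Adj v q.1))) := by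
  intro l'
  induction l' with
  | nil =>
      intro f _ _ _
      exact ⟨[], trivial, fun v _ => rfl, fun v _ => rfl, fun v _ => rfl, by simp [count]⟩
  | cons p l'' ihl =>
      intro f hval hp hfL
      obtain ⟨h1, h2, h3, h4⟩ := hval
      have hmemvs : ∀ x, x ∈ (Finset.univ.filter
          (fun v => ℓ v = s ∧ G.Adj p.1 v ∧ f v = p.2)).toList ↔
          (ℓ x = s ∧ G.Adj p.1 x ∧ f x = p.2) := by
        intro x; simp [Finset.mem_toList, Finset.mem_filter]
      obtain ⟨m₁, hval₁, hout₁, hnc₁, hcnt₁⟩ :=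
        dodge hnadj hdeg (u := p.1) (c := p.2)
          (Finset.univ.filter (fun v => ℓ v = s ∧ G.Adj p.1 v ∧ f v = p.2)).toList f
          (Finset.nodup_toList _)
          (fun w hw => ⟨((hmemvs w).mp hw).1, ((hmemvs w).mp hw).2.1⟩) hp hfL
      set vs := (Finset.univ.filter (fun v => ℓ v = s ∧ G.Adj p.1 v ∧ f v = p.2)).toList with hvsdef
      set g := play f m₁ with hgdef
      have hg_level : ∀ x, ℓ x ≠ s → g x = f x := fun x hx =>
        hout₁ x (fun h => hx ((hmemvs x).mp h).1)
      have hgp : Proper G ℓ s g := proper_play hp hval₁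
      have hgL : ∀ v, g v ∈ L v := lists_play hfL hval₁
      set f₂ := Function.update g p.1 p.2 with hf₂
      have hup : f₂ p.1 = p.2 := Function.update_self p.1 p.2 g
      have hun : ∀ x, x ≠ p.1 → f₂ x = g x := fun x hx => Function.update_of_ne hx p.2 g
      have hlu : ℓ p.1 ≠ s := by omega
      have hp2 : Proper G ℓ s f₂ := by
        intro a bb hadj ha hb
        by_cases hav : a = p.1 <;> by_cases hbv : bb = p.1
        · exact absurd hadj (by rw [hav, hbv]; exact G.irrefl)
        · rw [hav] at hadj ha ⊢
          rw [hup, hun bb hbv]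
          by_cases hbb : ℓ bb = s
          · by_cases hin : bb ∈ vs
            · exact (hnc₁ bb hin).symm
            · have hfbb : f bb ≠ p.2 := fun h => hin ((hmemvs bb).mpr ⟨hbb, hadj, h⟩)
              rw [hout₁ bb hin]
              exact fun h => hfbb h.symm
          · have hhighb : s + 1 ≤ ℓ bb := by omega
            have hbin : bb ∉ vs := fun h => hbb ((hmemvs bb).mp h).1
            rw [hout₁ bb hbin]
            have := h3 p.1 bb hadj h1 hhighb
            rwa [Function.update_self, Function.update_of_ne hbv] at this
        · rw [hbv] at hadj hb ⊢
          rw [hup, hun a hav]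
          have hadj' : G.Adj p.1 a := hadj.symm
          by_cases haa : ℓ a = s
          · by_cases hin : a ∈ vs
            · exact hnc₁ a hin
            · have hfaa : f a ≠ p.2 := fun h => hin ((hmemvs a).mpr ⟨haa, hadj', h⟩)
              rw [hout₁ a hin]
              exact hfaa
          · have hhigha : s + 1 ≤ ℓ a := by omega
            have hain : a ∉ vs := fun h => haa ((hmemvs a).mp h).1
            rw [hout₁ a hain]
            have := h3 p.1 a hadj' h1 hhigha
            rw [Function.update_self, Function.update_of_ne hav] at this
            exact fun h => this h.symm
        · rw [hun a hav, hun bb hbv]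
          exact hgp a bb hadj ha hb
      have hf₂L : ∀ v, f₂ v ∈ L v := by
        intro v
        by_cases hv : v = p.1
        · rw [hv, hup]; exact h2
        · rw [hun v hv]; exact hgL v
      have hagree : ∀ x, s + 1 ≤ ℓ x → Function.update f p.1 p.2 x = f₂ x := by
        intro x hx
        by_cases hxu : x = p.1
        · rw [hxu, Function.update_self, hup]
        · rw [Function.update_of_ne hxu, hun x hxu]
          exact (hg_level x (by omega)).symm
      obtain ⟨hval₂', hplayeq⟩ := valid_congr hagree h4
      obtain ⟨m₂, hvalm₂, hhigh₂, hlow₂, hcnt₂ne, hcnt₂s⟩ := ihl f₂ hval₂' hp2 hf₂L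
      refine ⟨m₁ ++ p :: m₂, ?_, ?_, ?_, ?_, ?_⟩
      · refine valid_append hval₁ ⟨by omega, h2, ?_, ?_⟩
        · rw [← hgdef, ← hf₂]; exact hp2
        · rw [← hgdef, ← hf₂]; exact hvalm₂
      · intro v hv
        have : play f (m₁ ++ p :: m₂) v = play f₂ m₂ v := by
          rw [play_append, play_cons, ← hgdef, ← hf₂]
        rw [this, hhigh₂ v hv, ← hplayeq v hv, play_cons]
      · intro v hv
        have heq : play f (m₁ ++ p :: m₂) v = play f₂ m₂ v := by
          rw [play_append, play_cons, ← hgdef, ← hf₂]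
        have hvu : v ≠ p.1 := fun h => by rw [h] at hv; omega
        rw [heq, hlow₂ v hv, hun v hvu, hg_level v (by omega)]
      · intro v hv
        have hc1 : count v m₁ = 0 := by
          have hvin : v ∉ vs := fun h => hv ((hmemvs v).mp h).1
          have := hcnt₁ v
          rw [if_neg hvin] at this
          omega
        rw [count_append, count_cons, count_cons, hc1, hcnt₂ne v hv]
        omega
      · intro v hv
        have hvu : p.1 ≠ v := fun h => by rw [h] at hlu; exact hlu hv
        rw [count_append, count_cons, if_neg hvu, add_zero, List.countP_cons]
        have hc2 := hcnt₂s v hv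
        by_cases hin : v ∈ vs
        · have hadj : G.Adj p.1 v := ((hmemvs v).mp hin).2.1
          have : decide (G.Adj v p.1) = true := by simp [hadj.symm]
          rw [this, if_pos rfl]
          have hc1 := hcnt₁ v
          rw [if_pos hin] at hc1
          omega
        · have hc1 := hcnt₁ v
          rw [if_neg hin] at hc1
          omega

lemma main_aux (hnadj : ∀ u v : V, ℓ u = ℓ v → ¬ G.Adj u v)
    (hdeg : ∀ v : V, (Finset.univ.filter (fun w => G.Adj v w ∧ ℓ v < ℓ w)).card + 2 ≤ (L v).card)
    {t k : ℕ} (ht : ∀ v : V, ℓ v < t) (hk : 1 ≤ k) (hLk : ∀ v : V, (L v).card ≤ k) :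
    ∀ (d s : ℕ), t ≤ s + d → ∀ σ η : V → ℕ, Proper G ℓ s σ → (∀ v, σ v ∈ L v) →
    Proper G ℓ s η → (∀ v, η v ∈ L v) → (∀ v, ℓ v < s → σ v = η v) →
    ∃ l, Valid G ℓ L s σ l ∧ play σ l = η ∧ ∀ v, count v l ≤ k ^ (t - ℓ v) := by
  intro d
  induction d with
  | zero =>
      intro s hts σ η _ _ _ _ hlow
      have hse : σ = η := funext fun v => hlow v (lt_of_lt_of_le (ht v) (by omega))
      exact ⟨[], trivial, hse, fun v => Nat.zero_le _⟩
  | succ d ihd =>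
      intro s hts σ η hpσ hσL hpη hηL hlow
      by_cases hts' : t ≤ s
      · have hse : σ = η := funext fun v => hlow v (lt_of_lt_of_le (ht v) hts')
        exact ⟨[], trivial, hse, fun v => Nat.zero_le _⟩
      · have hst : s < t := by omega
        set η₁ : V → ℕ := fun v => if s + 1 ≤ ℓ v then η v else σ v with hη₁
        have hη₁p : Proper G ℓ (s + 1) η₁ := by
          refine (hpη.mono (Nat.le_succ s)).congr ?_
          intro v hv
          rw [hη₁]; simp [hv]
        have hη₁L : ∀ v, η₁ v ∈ L v := by
          intro v; rw [hη₁]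
          by_cases h : s + 1 ≤ ℓ v <;> simp [h, hσL v, hηL v]
        have hlow1 : ∀ v, ℓ v < s + 1 → σ v = η₁ v := by
          intro v hv
          rw [hη₁]; simp [Nat.not_le.mpr hv]
        obtain ⟨l', hvl', hpl', hcnt'⟩ :=
          ihd (s + 1) (by omega) σ η₁ (hpσ.mono (Nat.le_succ s)) hσL hη₁p hη₁L hlow1
        obtain ⟨m, hvalm, hhighm, hlowm, hcntne, hcnts⟩ := inner hnadj hdeg l' σ hvl' hpσ hσL
        have hgp : Proper G ℓ s (play σ m) := proper_play hpσ hvalm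
        have hgL : ∀ v, play σ m v ∈ L v := lists_play hσL hvalm
        have hg_high : ∀ w, s + 1 ≤ ℓ w → play σ m w = η w := by
          intro w hw
          rw [hhighm w hw, hpl', hη₁]
          simp [hw]
        have hmemvs : ∀ x, x ∈ (Finset.univ.filter (fun v => ℓ v = s)).toList ↔ ℓ x = s := by
          intro x; simp [Finset.mem_toList, Finset.mem_filter]
        obtain ⟨m₂, hval₂, hplay₂, hcnt₂⟩ :=
          finish hnadj hpη (Finset.univ.filter (fun v => ℓ v = s)).toList (play σ m)
            (Finset.nodup_toList _) (fun w hw => (hmemvs w).mp hw) hgp hηL hg_high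
        refine ⟨m ++ m₂, valid_append hvalm hval₂, ?_, ?_⟩
        · funext v
          rw [play_append, hplay₂ v]
          rcases lt_trichotomy (ℓ v) s with hv | hv | hv
          · rw [if_neg (fun h => by rw [(hmemvs v).mp h] at hv; omega)]
            rw [hlowm v hv]
            exact hlow v hv
          · rw [if_pos ((hmemvs v).mpr hv)]
          · rw [if_neg (fun h => by rw [(hmemvs v).mp h] at hv; omega)]
            exact hg_high v (by omega)
        · intro v
          rw [count_append]
          rcases lt_trichotomy (ℓ v) s with hv | hv | hv
          · have h1 : count v m = count v l' := hcntne v (by omega)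
            have h2 : count v l' = 0 := count_eq_zero_of_level hvl' (by omega)
            have h3 : count v m₂ ≤ 0 := by
              have := hcnt₂ v
              rwa [if_neg (fun h => by rw [(hmemvs v).mp h] at hv; omega)] at this
            omega
          · -- the main arithmetic case
            have hk2 : 2 ≤ k := by
              have := hdeg v
              have := hLk v
              omega
            have hc1 : count v m ≤ l'.countP (fun q => decide (G.Adj v q.1)) := hcnts v hv
            have hc2 : l'.countP (fun q => decide (G.Adj v q.1)) ≤
                ∑ u ∈ Finset.univ.filter (fun w => G.Adj v w ∧ ℓ v < ℓ w), count u l' := by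
              refine countP_le_sum l' _ _ ?_
              intro q hq hP
              have hql := (valid_mem hvl' q hq).1
              simp only [decide_eq_true_eq] at hP
              simp only [Finset.mem_filter, Finset.mem_univ, true_and]
              exact ⟨hP, by omega⟩
            have hc3 : ∑ u ∈ Finset.univ.filter (fun w => G.Adj v w ∧ ℓ v < ℓ w), count u l' ≤
                (Finset.univ.filter (fun w => G.Adj v w ∧ ℓ v < ℓ w)).card * k ^ (t - (s + 1)) := by
              have hsum : ∑ u ∈ Finset.univ.filter (fun w => G.Adj v w ∧ ℓ v < ℓ w), count u l' ≤
                  ∑ _u ∈ Finset.univ.filter (fun w => G.Adj v w ∧ ℓ v < ℓ w), k ^ (t - (s + 1)) := by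
                refine Finset.sum_le_sum ?_
                intro u hu
                simp only [Finset.mem_filter, Finset.mem_univ, true_and] at hu
                refine le_trans (hcnt' u) (Nat.pow_le_pow_right hk ?_)
                have : s + 1 ≤ ℓ u := by omega
                omega
              rw [Finset.sum_const, smul_eq_mul] at hsum
              exact hsum
            have hcard : (Finset.univ.filter (fun w => G.Adj v w ∧ ℓ v < ℓ w)).card ≤ k - 2 := by
              have := hdeg v
              have := hLk v
              omega
            have hc4 : count v m₂ ≤ 1 := by
              have := hcnt₂ v
              rcases le_or_gt (count v m₂) 1 with h | h
              · exact h
              · by_cases hin : v ∈ (Finset.univ.filter (fun w => ℓ w = s)).toList <;>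
                  simp [hin] at this <;> omega
            have hpow : 1 ≤ k ^ (t - (s + 1)) := Nat.one_le_pow _ _ (by omega)
            have hfinal : (k - 2) * k ^ (t - (s + 1)) + 1 ≤ k ^ (t - s) := by
              have hts2 : t - s = (t - (s + 1)) + 1 := by omega
              rw [hts2, pow_succ]
              have h2 : (k - 2) * k ^ (t - (s + 1)) + 2 * k ^ (t - (s + 1)) =
                  k ^ (t - (s + 1)) * k := by
                rw [← Nat.add_mul]
                have : k - 2 + 2 = k := by omega
                rw [this, Nat.mul_comm]
              omega
            have hmul : (Finset.univ.filter (fun w => G.Adj v w ∧ ℓ v < ℓ w)).card *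
                k ^ (t - (s + 1)) ≤ (k - 2) * k ^ (t - (s + 1)) :=
              Nat.mul_le_mul_right _ hcard
            rw [hv]
            omega
          · have h1 : count v m = count v l' := hcntne v (by omega)
            have h2 : count v m₂ ≤ 0 := by
              have := hcnt₂ v
              rwa [if_neg (fun h => by rw [(hmemvs v).mp h] at hv; omega)] at this
            have := hcnt' v
            omega

end
end Stmt9

open Stmt9

theorem stmt9 {V : Type*} [Fintype V] [DecidableEq V] (G : SimpleGraph V)
    [DecidableRel G.Adj] (t : ℕ)
    (e : Fin (Fintype.card V) ≃ V) (b : Fin (Fintype.card V) → ℕ)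
    (hbmono : Monotone b) (hbt : ∀ i, b i < t)
    (hbind : ∀ i j, b i = b j → ¬ G.Adj (e i) (e j))
    (L : V → Finset ℕ)
    (hL : ∀ i : Fin (Fintype.card V),
      Set.ncard {j : Fin (Fintype.card V) | G.Adj (e i) (e j) ∧ i < j} + 2 ≤ (L (e i)).card)
    (σ η : V → ℕ)
    (hσ : (∀ u v : V, G.Adj u v → σ u ≠ σ v) ∧ ∀ v : V, σ v ∈ L v)
    (hη : (∀ u v : V, G.Adj u v → η u ≠ η v) ∧ ∀ v : V, η v ∈ L v) :
    ∃ (len : ℕ) (cs : ℕ → V → ℕ),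
      len ≤ Fintype.card V * (Finset.univ.biUnion L).card ^ (t + 1) ∧
      cs 0 = σ ∧ cs len = η ∧
      (∀ i : ℕ, i ≤ len →
        (∀ u v : V, G.Adj u v → cs i u ≠ cs i v) ∧ ∀ v : V, cs i v ∈ L v) ∧
      (∀ i : ℕ, i < len → ∀ x y : V,
        cs (i + 1) x ≠ cs i x → cs (i + 1) y ≠ cs i y → x = y) := by
  rcases isEmpty_or_nonempty V with hV | hV
  · refine ⟨0, fun _ => σ, Nat.zero_le _, rfl, funext fun v => (IsEmpty.false v).elim, ?_, ?_⟩
    · intro i _; exact hσ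
    · intro i hi; omega
  · set ℓ : V → ℕ := fun v => b (e.symm v) with hℓ
    have hnadj : ∀ u v : V, ℓ u = ℓ v → ¬ G.Adj u v := by
      intro u v h
      have := hbind (e.symm u) (e.symm v) h
      simpa using this
    have hdeg : ∀ v : V,
        (Finset.univ.filter (fun w => G.Adj v w ∧ ℓ v < ℓ w)).card + 2 ≤ (L v).card := by
      intro v
      have hL' := hL (e.symm v)
      rw [Equiv.apply_symm_apply] at hL'
      have hcard : (Finset.univ.filter (fun w => G.Adj v w ∧ ℓ v < ℓ w)).card ≤
          Set.ncard {j : Fin (Fintype.card V) | G.Adj (e (e.symm v)) (e j) ∧ e.symm v < j} := by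
        rw [Set.ncard_eq_toFinset_card']
        refine Finset.card_le_card_of_injOn (fun w => e.symm w) ?_ ?_
        · intro w hw
          simp only [Finset.mem_coe, Finset.coe_filter, Finset.mem_filter, Finset.mem_univ, true_and, Set.mem_setOf_eq] at hw
          simp only [Finset.mem_coe, Set.mem_toFinset, Set.mem_setOf_eq, Equiv.apply_symm_apply]
          refine ⟨hw.1, ?_⟩
          by_contra hc
          have hle : e.symm w ≤ e.symm v := not_lt.mp hc
          have hmon := hbmono hle
          have h2 : b (e.symm v) < b (e.symm w) := hw.2
          omega
        · exact fun a _ b _ h => e.symm.injective h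
      rw [Equiv.apply_symm_apply] at hcard
      omega
    have hLk : ∀ v : V, (L v).card ≤ (Finset.univ.biUnion L).card := fun v =>
      Finset.card_le_card (fun c hc => Finset.mem_biUnion.mpr ⟨v, Finset.mem_univ v, hc⟩)
    have hk : 1 ≤ (Finset.univ.biUnion L).card := by
      obtain ⟨v0⟩ := hV
      have h1 := hdeg v0
      have h2 := hLk v0
      omega
    have ht : ∀ v : V, ℓ v < t := fun v => hbt _
    obtain ⟨l, hvl, hplay, hcnt⟩ :=
      main_aux hnadj hdeg ht hk hLk t 0 (by omega) σ η
        (fun u v a _ _ => hσ.1 u v a) hσ.2 (fun u v a _ _ => hη.1 u v a) hη.2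
        (fun v hv => absurd hv (by omega))
    refine ⟨l.length, fun i => play σ (l.take i), ?_, ?_, ?_, ?_, ?_⟩
    · rw [length_eq_sum_count l]
      calc ∑ v : V, count v l ≤ ∑ _v : V, (Finset.univ.biUnion L).card ^ (t + 1) := by
            refine Finset.sum_le_sum fun v _ => ?_
            exact le_trans (hcnt v) (Nat.pow_le_pow_right hk (by omega))
        _ = Fintype.card V * (Finset.univ.biUnion L).card ^ (t + 1) := by
            rw [Finset.sum_const, smul_eq_mul, Finset.card_univ]
    · simp [play]
    · show play σ (l.take l.length) = η
      rw [List.take_length, hplay]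
    · intro i _
      have hvt := valid_take hvl i
      exact ⟨fun u v a => proper_play (fun u v a _ _ => hσ.1 u v a) hvt u v a
        (Nat.zero_le _) (Nat.zero_le _), lists_play hσ.2 hvt⟩
    · intro i hi x y hx' hy'
      have hx : play σ (l.take (i + 1)) x ≠ play σ (l.take i) x := hx'
      have hy : play σ (l.take (i + 1)) y ≠ play σ (l.take i) y := hy'
      have hstep : play σ (l.take (i + 1)) =
          Function.update (play σ (l.take i)) (l.get ⟨i, hi⟩).1 (l.get ⟨i, hi⟩).2 := by
        have h1 : l.take (i + 1) = l.take i ++ [l.get ⟨i, hi⟩] := by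
          rw [List.take_succ]
          congr 1
          simp [List.getElem?_eq_getElem hi]
        rw [h1, play_append]
        rfl
      have hxp : x = (l.get ⟨i, hi⟩).1 := by
        by_contra hc
        rw [hstep, Function.update_of_ne hc] at hx
        exact hx rfl
      have hyp : y = (l.get ⟨i, hi⟩).1 := by
        by_contra hc
        rw [hstep, Function.update_of_ne hc] at hy
        exact hy rfl
      rw [hxp, hyp]
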